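/- Let A, B be C*-algebras, r > 0, and H : B_A(0;r) → B a holomorphic map with Taylor expansion H = ∑_{n≥0} P_n at 0. If H is orthogonally additive on B_A(0;r) (i.e., H(a+b) = H(a) + H(b) whenever a, b ∈ B_A(0;r), a+b ∈ B_A(0;r), and ab = ba = 0), then each homogeneous polynomial P_n is orthogonally additive on A, and P_0 = 0. -/

import Mathlib

open ContinuousLinearMap in
private lemma aux_series {A B : Type*} [NonUnitalCStarAlgebra A] [NonUnitalCStarAlgebra B]
    {r : ℝ} (hr : 0 < r) (H : A → B) (p : FormalMultilinearSeries ℂ A B)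
    (hH : HasFPowerSeriesOnBall H p 0 (ENNReal.ofReal r)) (x : A) :
    HasFPowerSeriesOnBall (fun t : ℂ => H (t • x))
      (fun n => (p n).compContinuousLinearMap fun _ : Fin n => toSpanSingleton ℂ x)
      0 (ENNReal.ofReal (r / (‖x‖ + 1))) := by
  have hx1 : (0 : ℝ) < ‖x‖ + 1 := by positivity
  have hρ : (0 : ℝ) < r / (‖x‖ + 1) := by positivity
  set q : FormalMultilinearSeries ℂ ℂ B :=
    fun n => (p n).compContinuousLinearMap fun _ : Fin n => toSpanSingleton ℂ x with hq
  have hqnorm : ∀ n, ‖q n‖ ≤ ‖p n‖ * ‖x‖ ^ n := by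
    intro n
    refine ((p n).norm_compContinuousLinearMap_le _).trans ?_
    simp [norm_toSpanSingleton]
  -- radius bound
  have hsr : ∀ t : ℂ, ‖t‖ < r / (‖x‖ + 1) → ‖t • x‖ < r := by
    intro t ht
    calc ‖t • x‖ = ‖t‖ * ‖x‖ := norm_smul t x
    _ ≤ ‖t‖ * (‖x‖ + 1) := by nlinarith [norm_nonneg t]
    _ < r / (‖x‖ + 1) * (‖x‖ + 1) := by nlinarith
    _ = r := by field_simp
  have hrle : ENNReal.ofReal (r / (‖x‖ + 1)) ≤ q.radius := by
    have hlt : ((‖x‖ * (r / (‖x‖ + 1))).toNNReal : ENNReal) < p.radius := by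
      refine lt_of_lt_of_le ?_ hH.r_le
      rw [ENNReal.coe_nnreal_eq, Real.coe_toNNReal _ (by positivity),
        ENNReal.ofReal_lt_ofReal_iff hr, mul_div_assoc', div_lt_iff₀ hx1]
      nlinarith [norm_nonneg x]
    obtain ⟨C, hC, hbound⟩ := p.norm_mul_pow_le_of_lt_radius hlt
    rw [ENNReal.ofReal]
    apply q.le_radius_of_bound C
    intro n
    have h1 := hbound n
    rw [Real.coe_toNNReal _ (by positivity)] at h1 ⊢
    calc ‖q n‖ * (r / (‖x‖ + 1)) ^ n ≤ ‖p n‖ * ‖x‖ ^ n * (r / (‖x‖ + 1)) ^ n := by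
          apply mul_le_mul_of_nonneg_right (hqnorm n) (by positivity)
    _ = ‖p n‖ * (‖x‖ * (r / (‖x‖ + 1))) ^ n := by ring
    _ ≤ C := h1
  refine ⟨hrle, by simpa using hρ, ?_⟩
  intro t ht
  simp only [EMetric.mem_ball, edist_zero_right] at ht
  have ht' : ‖t‖ < r / (‖x‖ + 1) := by
    rw [← ofReal_norm] at ht
    exact (ENNReal.ofReal_lt_ofReal_iff hρ).mp ht
  have hball : t • x ∈ Metric.eball (0 : A) (ENNReal.ofReal r) := by
    simp only [EMetric.mem_ball, edist_zero_right, ← ofReal_norm]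
    exact (ENNReal.ofReal_lt_ofReal_iff hr).mpr (hsr t ht')
  have hs := hH.hasSum hball
  simp only [zero_add] at hs ⊢
  convert hs using 2 with n
  simp [hq]

theorem stmt_2 {A B : Type*} [NonUnitalCStarAlgebra A] [NonUnitalCStarAlgebra B]
    {r : ℝ} (hr : 0 < r) (H : A → B) (p : FormalMultilinearSeries ℂ A B)
    (hH : HasFPowerSeriesOnBall H p 0 (ENNReal.ofReal r))
    (horth : ∀ a b : A, ‖a‖ < r → ‖b‖ < r → ‖a + b‖ < r →
      a * b = 0 → b * a = 0 → H (a + b) = H a + H b) :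
    (∀ (n : ℕ) (a b : A), a * b = 0 → b * a = 0 →
        (p n fun _ => a + b) = (p n fun _ => a) + (p n fun _ => b)) ∧
      ∀ x : A, (p 0 fun _ => x) = 0 := by
  have hH0 : H 0 = 0 := by
    have h := horth 0 0 (by simpa using hr) (by simpa using hr) (by simpa using hr)
      (by simp) (by simp)
    rw [add_zero] at h
    exact (left_eq_add.mp h)
  constructor
  · intro n a b hab hba
    have h1 := (aux_series hr H p hH (a + b)).hasFPowerSeriesAt
    have h2 := ((aux_series hr H p hH a).hasFPowerSeriesAt).add
      ((aux_series hr H p hH b).hasFPowerSeriesAt)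
    have hεa : (0:ℝ) < r / (‖a‖ + 1) := by positivity
    have hεb : (0:ℝ) < r / (‖b‖ + 1) := by positivity
    have hεc : (0:ℝ) < r / (‖a + b‖ + 1) := by positivity
    set ε := min (r / (‖a‖ + 1)) (min (r / (‖b‖ + 1)) (r / (‖a + b‖ + 1))) with hε
    have hεpos : (0:ℝ) < ε := lt_min hεa (lt_min hεb hεc)
    have hnorm : ∀ (x : A) (t : ℂ), ‖t‖ < r / (‖x‖ + 1) → ‖t • x‖ < r := by
      intro x t ht
      have hx1 : (0:ℝ) < ‖x‖ + 1 := by positivity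
      calc ‖t • x‖ = ‖t‖ * ‖x‖ := norm_smul t x
      _ ≤ ‖t‖ * (‖x‖ + 1) := by nlinarith [norm_nonneg t]
      _ < r / (‖x‖ + 1) * (‖x‖ + 1) := by nlinarith
      _ = r := by field_simp
    have heq : ∀ᶠ t : ℂ in nhds 0, H (t • (a + b)) = H (t • a) + H (t • b) := by
      filter_upwards [Metric.ball_mem_nhds (0:ℂ) hεpos] with t ht
      rw [Metric.mem_ball, dist_zero_right] at ht
      have hta : ‖t • a‖ < r := hnorm a t (ht.trans_le (min_le_left _ _))
      have htb : ‖t • b‖ < r := hnorm b t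
        (ht.trans_le ((min_le_right _ _).trans (min_le_left _ _)))
      have htc : ‖t • a + t • b‖ < r := by
        rw [← smul_add]
        exact hnorm (a + b) t (ht.trans_le ((min_le_right _ _).trans (min_le_right _ _)))
      have := horth (t • a) (t • b) hta htb htc
        (by rw [smul_mul_smul_comm, hab, smul_zero])
        (by rw [smul_mul_smul_comm, hba, smul_zero])
      rw [← smul_add] at this
      exact this
    have key := h1.eq_formalMultilinearSeries_of_eventually h2 heq
    have h3 := (congrFun key n).trans (FormalMultilinearSeries.add_apply _ _ n)
    have h4 := congrArg (fun (m : ContinuousMultilinearMap ℂ (fun _ : Fin n => ℂ) B) =>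
      m fun _ => (1:ℂ)) h3
    simp only [Pi.add_apply, ContinuousMultilinearMap.add_apply,
      ContinuousMultilinearMap.compContinuousLinearMap_apply,
      ContinuousLinearMap.toSpanSingleton_apply, one_smul] at h4
    exact h4
  · intro x
    rw [hH.coeff_zero fun _ => x, hH0]
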